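/- For ℰ = 0 geodesics (E = 0, L_z ≠ 0) with 𝒬 = cos²θ_max/sin²θ_max, the radial function satisfies sin²θ_max · R(r, 0, 1, 𝒬) = −r² + 2Mr − a²cos²θ_max, whose unique root in the exterior region r > M is r_turn = M + √(M² − a²cos²θ_max), coinciding with the ergosphere radius r_ergo(θ_max). -/

import Mathlib

/-- For `ℰ = 0` null geodesics with `𝒬 = cos²θ_max/sin²θ_max`:
`sin²θ_max · R(r, 0, 1, 𝒬) = −r² + 2Mr − a²cos²θ_max`, and its unique root
with `r > M` is `r_turn = M + √(M² − a²cos²θ_max)`, the ergosphere radius. -/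
theorem zero_energy_turning_point (M a : ℝ) (hM : 0 < M)
    (ha0 : 0 ≤ a) (haM : a < M)
    (θmax : ℝ) (hθ : θmax ∈ Set.Ioo 0 Real.pi)
    (Q : ℝ) (hQdef : Q = Real.cos θmax ^ 2 / Real.sin θmax ^ 2)
    (R : ℝ → ℝ)
    (hR : ∀ r, R r = ((r ^ 2 + a ^ 2) * 0 - a) ^ 2 -
      (r ^ 2 - 2 * M * r + a ^ 2) * (Q + (a * 0 - 1) ^ 2)) :
    (∀ r : ℝ, Real.sin θmax ^ 2 * R r =
      -r ^ 2 + 2 * M * r - a ^ 2 * Real.cos θmax ^ 2) ∧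
    (∀ r : ℝ, M < r →
      (R r = 0 ↔ r = M + Real.sqrt (M ^ 2 - a ^ 2 * Real.cos θmax ^ 2))) := by
  have hsin : Real.sin θmax ≠ 0 :=
    ne_of_gt (Real.sin_pos_of_pos_of_lt_pi hθ.1 hθ.2)
  have hsq : Real.sin θmax ^ 2 ≠ 0 := pow_ne_zero 2 hsin
  have hpyth : Real.sin θmax ^ 2 + Real.cos θmax ^ 2 = 1 := Real.sin_sq_add_cos_sq θmax
  have hmain : ∀ r : ℝ, Real.sin θmax ^ 2 * R r =
      -r ^ 2 + 2 * M * r - a ^ 2 * Real.cos θmax ^ 2 := by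
    intro r
    rw [hR r, hQdef]
    field_simp
    linear_combination (-(r * (r - 2 * M))) * hpyth
  refine ⟨hmain, fun r hr => ?_⟩
  have hcos2 : Real.cos θmax ^ 2 ≤ 1 := by nlinarith [sq_nonneg (Real.sin θmax)]
  have hD : 0 ≤ M ^ 2 - a ^ 2 * Real.cos θmax ^ 2 := by nlinarith [sq_nonneg (Real.cos θmax)]
  set s := Real.sqrt (M ^ 2 - a ^ 2 * Real.cos θmax ^ 2) with hs
  have hs2 : s ^ 2 = M ^ 2 - a ^ 2 * Real.cos θmax ^ 2 := Real.sq_sqrt hD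
  have hsnn : 0 ≤ s := Real.sqrt_nonneg _
  constructor
  · intro h0
    have h1 : Real.sin θmax ^ 2 * R r = 0 := by rw [h0]; ring
    rw [hmain r] at h1
    have hfac : (r - (M + s)) * (r - (M - s)) = 0 := by nlinarith
    rcases mul_eq_zero.1 hfac with h | h
    · linarith
    · nlinarith
  · intro h
    have : Real.sin θmax ^ 2 * R r = 0 := by
      rw [hmain r, h]; nlinarith
    exact (mul_eq_zero.1 this).resolve_left hsq
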